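/- A subset A of a topological space X is e*-regular if and only if A = e*-cl(e*-int(A)), if and only if A = e*-int(e*-cl(A)). -/
import Mathlib


open Set Topology

variable {X : Type*} [TopologicalSpace X]

/-- δ-closure of A. -/
def deltaCl (A : Set X) : Set X :=
  {x | ∀ U : Set X, IsOpen U → x ∈ U → (interior (closure U) ∩ A).Nonempty}

/-- A is e*-open if A ⊆ cl(int(δ-cl A)). -/
def EStarOpen (A : Set X) : Prop := A ⊆ closure (interior (deltaCl A))

/-- A is e*-closed if its complement is e*-open. -/
def EStarClosed (A : Set X) : Prop := EStarOpen Aᶜ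

/-- e*-closure: intersection of all e*-closed supersets. -/
def eStarCl (A : Set X) : Set X := ⋂₀ {F | EStarClosed F ∧ A ⊆ F}

/-- e*-interior: union of all e*-open subsets. -/
def eStarInt (A : Set X) : Set X := ⋃₀ {U | EStarOpen U ∧ U ⊆ A}

/-- e*-regular: both e*-open and e*-closed. -/
def EStarRegular (A : Set X) : Prop := EStarOpen A ∧ EStarClosed A

/-- e*-θ-closure. -/
def eStarClTheta (A : Set X) : Set X :=
  {x | ∀ U : Set X, EStarOpen U → x ∈ U → (eStarCl U ∩ A).Nonempty}

/-- e*-θ-closed. -/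
def EStarThetaClosed (A : Set X) : Prop := A = eStarClTheta A

/-- e*-θ-open. -/
def EStarThetaOpen (A : Set X) : Prop := EStarThetaClosed Aᶜ

/-- quasi e*-θ-closed. -/
def QEStarThetaClosed (A : Set X) : Prop :=
  ∀ U : Set X, EStarThetaOpen U → A ⊆ U → eStarClTheta A ⊆ U

/-- e*-θ-kernel. -/
def eStarKerTheta (A : Set X) : Set X := ⋂₀ {U | EStarThetaOpen U ∧ A ⊆ U}

lemma subset_deltaCl' (A : Set X) : A ⊆ deltaCl A := by
  intro x hx U hU hxU
  exact ⟨x, interior_maximal subset_closure hU hxU, hx⟩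

lemma deltaCl_mono' {A B : Set X} (h : A ⊆ B) : deltaCl A ⊆ deltaCl B := by
  intro x hx U hU hxU
  obtain ⟨y, hy1, hy2⟩ := hx U hU hxU
  exact ⟨y, hy1, h hy2⟩

lemma cid_mono' {A B : Set X} (h : A ⊆ B) :
    closure (interior (deltaCl A)) ⊆ closure (interior (deltaCl B)) :=
  closure_mono (interior_mono (deltaCl_mono' h))

lemma isOpen_eStarOpen' {A : Set X} (h : IsOpen A) : EStarOpen A :=
  (interior_maximal (subset_deltaCl' A) h).trans subset_closure

lemma isClosed_eStarClosed' {A : Set X} (h : IsClosed A) : EStarClosed A :=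
  isOpen_eStarOpen' h.isOpen_compl

lemma eStarOpen_sUnion' {S : Set (Set X)} (h : ∀ U ∈ S, EStarOpen U) :
    EStarOpen (⋃₀ S) := by
  intro x hx
  obtain ⟨U, hU, hxU⟩ := hx
  exact cid_mono' (subset_sUnion_of_mem hU) (h U hU hxU)

lemma eStarOpen_eStarInt' (A : Set X) : EStarOpen (eStarInt A) :=
  eStarOpen_sUnion' (fun _ hU => hU.1)

lemma eStarInt_subset' (A : Set X) : eStarInt A ⊆ A :=
  sUnion_subset (fun _ hU => hU.2)

lemma subset_eStarCl' (A : Set X) : A ⊆ eStarCl A := by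
  intro x hx F hF
  exact hF.2 hx

lemma compl_eStarInt' (A : Set X) : (eStarInt A)ᶜ = eStarCl Aᶜ := by
  ext x
  simp only [eStarInt, eStarCl, mem_compl_iff, mem_sUnion, mem_sInter, mem_setOf_eq,
    not_exists]
  constructor
  · intro h F hF
    by_contra hx
    exact h Fᶜ ⟨⟨hF.1, compl_subset_comm.mp hF.2⟩, hx⟩
  · rintro h U ⟨⟨hU, hUA⟩, hxU⟩
    have : EStarClosed Uᶜ := by
      unfold EStarClosed
      rwa [compl_compl]
    exact h Uᶜ ⟨this, compl_subset_compl.mpr hUA⟩ hxU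

lemma compl_eStarCl' (A : Set X) : (eStarCl A)ᶜ = eStarInt Aᶜ := by
  rw [← compl_compl (eStarInt Aᶜ), compl_eStarInt', compl_compl]

lemma eStarClosed_eStarCl' (A : Set X) : EStarClosed (eStarCl A) := by
  unfold EStarClosed
  rw [compl_eStarCl']
  exact eStarOpen_eStarInt' Aᶜ

lemma eStarOpen_eStarCl' {B : Set X} (hB : EStarOpen B) : EStarOpen (eStarCl B) := by
  have h1 : eStarCl B ⊆ closure (interior (deltaCl B)) :=
    sInter_subset_of_mem ⟨isClosed_eStarClosed' isClosed_closure, hB⟩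
  exact h1.trans (cid_mono' (subset_eStarCl' B))

lemma eStarClosed_eStarInt' {B : Set X} (hB : EStarClosed B) :
    EStarClosed (eStarInt B) := by
  unfold EStarClosed
  rw [compl_eStarInt']
  exact eStarOpen_eStarCl' hB

lemma eStarInt_eq_self' {A : Set X} (h : EStarOpen A) : eStarInt A = A :=
  subset_antisymm (eStarInt_subset' A) (subset_sUnion_of_mem ⟨h, subset_rfl⟩)

lemma eStarCl_eq_self' {A : Set X} (h : EStarClosed A) : eStarCl A = A :=
  subset_antisymm (sInter_subset_of_mem ⟨h, subset_rfl⟩) (subset_eStarCl' A)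

theorem stmt8 (A : Set X) :
    (EStarRegular A ↔ A = eStarCl (eStarInt A)) ∧
    (EStarRegular A ↔ A = eStarInt (eStarCl A)) := by
  constructor
  · constructor
    · rintro ⟨ho, hc⟩
      rw [eStarInt_eq_self' ho, eStarCl_eq_self' hc]
    · intro h
      constructor
      · rw [h]; exact eStarOpen_eStarCl' (eStarOpen_eStarInt' A)
      · rw [h]; exact eStarClosed_eStarCl' _
  · constructor
    · rintro ⟨ho, hc⟩
      rw [eStarCl_eq_self' hc, eStarInt_eq_self' ho]
    · intro h
      constructor
      · rw [h]; exact eStarOpen_eStarInt' _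
      · rw [h]; exact eStarClosed_eStarInt' (eStarClosed_eStarCl' A)
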